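/- Let V, D be points of the Euclidean plane EuclideanSpace ℝ (Fin 2) and let u, v be linearly independent vectors, so that ℓ₁ = {V + t • u : t ∈ ℝ} and ℓ₂ = {V + t • v : t ∈ ℝ} are two distinct lines through V. Suppose D lies on neither ℓ₁ nor ℓ₂, and let k > 0. Then there exist real numbers t, s such that, writing X = V + t • u and Y = V + s • v, the points D, X, Y are collinear (Collinear ℝ {D, X, Y}) and dist X Y = k. -/

import Mathlib

/-- The problem of Nicomedes: given an angle at V with sides in the directions u, v and
a point D lying on neither side, there is a line through D cutting the two sides in
points X, Y with XY equal to a prescribed length k. -/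
theorem nicomedes_neusis (V D : EuclideanSpace ℝ (Fin 2))
    (u v : EuclideanSpace ℝ (Fin 2)) (huv : LinearIndependent ℝ ![u, v])
    (hD1 : ∀ t : ℝ, D ≠ V + t • u) (hD2 : ∀ t : ℝ, D ≠ V + t • v)
    (k : ℝ) (hk : 0 < k) :
    ∃ t s : ℝ,
      Collinear ℝ ({D, V + t • u, V + s • v} : Set (EuclideanSpace ℝ (Fin 2))) ∧
      dist (V + t • u) (V + s • v) = k := by
  -- u, v span the plane
  have hspan : Submodule.span ℝ (Set.range ![u, v]) = ⊤ := by
    apply huv.span_eq_top_of_card_eq_finrank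
    simp [finrank_euclideanSpace]
  have hrange : Set.range ![u, v] = {u, v} := by
    simp [Matrix.range_cons, Matrix.range_empty, Set.pair_comm]
  obtain ⟨a, b, hab⟩ : ∃ a b : ℝ, a • u + b • v = D - V := by
    have : D - V ∈ Submodule.span ℝ ({u, v} : Set (EuclideanSpace ℝ (Fin 2))) := by
      rw [← hrange, hspan]; trivial
    exact Submodule.mem_span_pair.mp this
  have hD : D = V + a • u + b • v := by
    have := hab
    rw [eq_comm, sub_eq_iff_eq_add] at this
    rw [this]; abel
  have ha : a ≠ 0 := by
    intro h
    exact hD2 b (by rw [hD, h]; simp)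
  have hb : b ≠ 0 := by
    intro h
    exact hD1 a (by rw [hD, h]; simp)
  have hu : u ≠ 0 := huv.ne_zero 0
  have hu' : (0:ℝ) < ‖u‖ := norm_pos_iff.mpr hu
  set L : ℝ := |a| * ‖u‖ with hL
  have hLpos : 0 < L := mul_pos (abs_pos.mpr ha) hu'
  set M : ℝ := k + |b| * ‖v‖ with hM
  have hMpos : 0 < M := by positivity
  set σ₀ : ℝ := M / (M + L) with hσ₀
  have hσ₀pos : 0 < σ₀ := div_pos hMpos (by linarith)
  have hσ₀lt : σ₀ < 1 := by
    rw [hσ₀, div_lt_one (by linarith)]; linarith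
  clear_value L M
  -- the family
  set f : ℝ → ℝ := fun σ => ‖(a * σ / (σ - 1)) • u - (b * σ) • v‖ with hf
  have hne : ∀ σ ∈ Set.Icc (0:ℝ) σ₀, σ - 1 ≠ 0 := by
    intro σ hσ
    have : σ < 1 := lt_of_le_of_lt hσ.2 hσ₀lt
    intro h; linarith [sub_eq_zero.mp h]
  have hcont : ContinuousOn f (Set.Icc 0 σ₀) := by
    apply ContinuousOn.norm
    apply ContinuousOn.sub
    · exact (((continuousOn_const.mul continuousOn_id).div
        (continuousOn_id.sub continuousOn_const) hne)).smul continuousOn_const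
    · exact (continuousOn_const.mul continuousOn_id).smul continuousOn_const
  have hf0 : f 0 = 0 := by simp [hf]
  have hfσ₀ : k ≤ f σ₀ := by
    have h1 : ‖(a * σ₀ / (σ₀ - 1)) • u‖ - ‖(b * σ₀) • v‖ ≤ f σ₀ :=
      norm_sub_norm_le _ _
    have h2 : ‖(a * σ₀ / (σ₀ - 1)) • u‖ = M := by
      have harg : a * σ₀ / (σ₀ - 1) = -(a * M / L) := by
        rw [hσ₀]
        have h1 : M + L ≠ 0 := by positivity
        have h2 : |a| ≠ 0 := abs_ne_zero.mpr ha
        have h3 : ‖u‖ ≠ 0 := hu'.ne'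
        have hL0 : L ≠ 0 := hLpos.ne'
        field_simp
        ring_nf
        rw [mul_inv_cancel₀ hL0]
      rw [harg, norm_smul, Real.norm_eq_abs, abs_neg, abs_div, abs_mul,
        abs_of_pos hMpos, abs_of_pos hLpos, hL]
      have h4 : |a| ≠ 0 := abs_ne_zero.mpr ha
      have h3 : ‖u‖ ≠ 0 := hu'.ne'
      field_simp
    have h3 : ‖(b * σ₀) • v‖ ≤ |b| * ‖v‖ := by
      rw [norm_smul, Real.norm_eq_abs, abs_mul]
      have : |σ₀| ≤ 1 := by
        rw [abs_of_pos hσ₀pos]; linarith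
      calc |b| * |σ₀| * ‖v‖ ≤ |b| * 1 * ‖v‖ := by
            apply mul_le_mul_of_nonneg_right _ (norm_nonneg _)
            exact mul_le_mul_of_nonneg_left this (abs_nonneg _)
        _ = |b| * ‖v‖ := by ring
    have : M - |b| * ‖v‖ ≤ f σ₀ := by
      calc M - |b| * ‖v‖ ≤ ‖(a * σ₀ / (σ₀ - 1)) • u‖ - ‖(b * σ₀) • v‖ := by
            rw [h2]; linarith
        _ ≤ f σ₀ := h1
    rw [hM] at this; linarith
  -- IVT
  have hmem : k ∈ Set.Icc (f 0) (f σ₀) := by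
    constructor
    · rw [hf0]; exact hk.le
    · exact hfσ₀
  obtain ⟨σ, hσmem, hσ⟩ := intermediate_value_Icc hσ₀pos.le hcont hmem
  have hσ1 : σ - 1 ≠ 0 := hne σ hσmem
  refine ⟨a * σ / (σ - 1), b * σ, ?_, ?_⟩
  · -- collinearity
    rw [collinear_iff_exists_forall_eq_smul_vadd]
    refine ⟨V + (b * σ) • v, D - (V + (b * σ) • v), ?_⟩
    intro p hp
    simp only [Set.mem_insert_iff, Set.mem_singleton_iff] at hp
    rcases hp with rfl | rfl | rfl
    · exact ⟨1, by simp⟩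
    · refine ⟨σ / (σ - 1), ?_⟩
      simp only [vadd_eq_add]
      rw [hD]
      match_scalars <;> field_simp <;> ring
    · exact ⟨0, by simp⟩
  · rw [dist_add_left, dist_eq_norm]
    exact hσ
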